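/- In Model S with a > 0, there exists a constant C₁ such that for all n, |E X_n(u) − n·m/(a·u + b + 1)| ≤ C₁, where u is the minimal score of a new individual. -/

import Mathlib

open MeasureTheory ProbabilityTheory Filter

/-- **Model S**: a general population evolution model.  The population lives on a
probability space `(Ω, μ)` with filtration `F`.  `pop n ω` is the number of individuals
alive at time `n` (individuals are labelled `0, 1, 2, …` in order of birth, so individual
`i` is alive at time `n` iff `i < pop n ω`).  `S n i ω` is the score of individual `i`
at time `n`.  At most `t` individuals are born at each step, every individual has score
at least `u`, a newborn has score exceeding `u` with probability `O(1/n)`, the score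
evolution satisfies the Model S transition probabilities with parameters `a, b`, the
total score increase in one step is at most `t`, and the expected number `ξ_n` of
newborns satisfies `E ξ_n = m + O(1/n)`. -/
structure ModelS (Ω : Type) [MeasurableSpace Ω] where
  μ : Measure Ω
  isProb : IsProbabilityMeasure μ
  F : ℕ → MeasurableSpace Ω
  F_mono : Monotone F
  F_le : ∀ n, F n ≤ (inferInstance : MeasurableSpace Ω)
  t : ℕ
  t_pos : 0 < t
  u : ℕ
  u_pos : 0 < u
  a : ℝ
  b : ℝ
  m : ℝ
  c₀ : ℝ
  a_nonneg : 0 ≤ a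
  b_nonneg : 0 ≤ b
  m_pos : 0 < m
  c₀_pos : 0 < c₀
  pop : ℕ → Ω → ℕ
  pop_mono : ∀ ω, Monotone fun n => pop n ω
  pop_adapted : ∀ n, Measurable[F n] (pop n)
  pop_zero_le : ∀ ω, pop 0 ω ≤ t
  births_le : ∀ n ω, pop (n + 1) ω - pop n ω ≤ t
  S : ℕ → ℕ → Ω → ℕ
  S_adapted : ∀ n i, Measurable[F n] (S n i)
  S_mono : ∀ n i ω, S n i ω ≤ S (n + 1) i ω
  score_ge_u : ∀ n i ω, i < pop n ω → u ≤ S n i ω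
  new_score_u : ∀ n : ℕ, 1 ≤ n →
      μ {ω | ∃ i, pop (n - 1) ω ≤ i ∧ i < pop n ω ∧ u < S n i ω} ≤ ENNReal.ofReal (c₀ / n)
  total_incr_le : ∀ n ω, ∑ i ∈ Finset.range (pop n ω), (S (n + 1) i ω - S n i ω) ≤ t
  score_up_one : ∀ n : ℕ, 1 ≤ n → ∀ i : ℕ, ∀ᵐ ω ∂μ, i < pop n ω →
      |(μ[Set.indicator {ω' | S (n + 1) i ω' = S n i ω' + 1} (fun _ => (1 : ℝ)) | F n]) ω
          - a * (S n i ω : ℝ) / n - b / n| ≤ c₀ * ((S n i ω : ℝ) / n) ^ 2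
  score_up_big : ∀ n : ℕ, 1 ≤ n → ∀ i : ℕ, ∀ᵐ ω ∂μ, i < pop n ω →
      (μ[Set.indicator {ω' | S n i ω' + 1 < S (n + 1) i ω'} (fun _ => (1 : ℝ)) | F n]) ω
          ≤ c₀ * ((S n i ω : ℝ) / n) ^ 2
  xi_mean : ∀ n : ℕ, 1 ≤ n →
      |(∫ ω, ((pop n ω : ℝ) - (pop (n - 1) ω : ℝ)) ∂μ) - m| ≤ c₀ / n

namespace ModelS

variable {Ω : Type} [MeasurableSpace Ω]

/-- `X n s`: the number of individuals having score `s` at time `n`. -/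
def X (M : ModelS Ω) (n s : ℕ) (ω : Ω) : ℕ :=
  ((Finset.range (M.pop n ω)).filter fun i => M.S n i ω = s).card

/-- `EX n s = 𝔼 X_n(s)`. -/
noncomputable def EX (M : ModelS Ω) (n s : ℕ) : ℝ := ∫ ω, (M.X n s ω : ℝ) ∂M.μ

/-- the limiting score distribution `c(u,s)`. -/
noncomputable def c (M : ModelS Ω) (s : ℕ) : ℝ :=
  M.m * Real.Gamma ((s : ℝ) + M.b / M.a) * Real.Gamma ((M.u : ℝ) + (M.b + 1) / M.a) /
    (M.a * Real.Gamma ((s : ℝ) + (M.b + M.a + 1) / M.a) * Real.Gamma ((M.u : ℝ) + M.b / M.a))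

end ModelS

open scoped Classical

namespace ModelS

variable {Ω : Type} [MeasurableSpace Ω] (M : ModelS Ω)

lemma meas_S (n i : ℕ) : Measurable (M.S n i) :=
  (M.S_adapted n i).mono (M.F_le n) le_rfl

lemma meas_pop (n : ℕ) : Measurable (M.pop n) :=
  (M.pop_adapted n).mono (M.F_le n) le_rfl

lemma pop_le (n : ℕ) (ω : Ω) : M.pop n ω ≤ M.t * (n + 1) := by
  induction n with
  | zero => simpa using M.pop_zero_le ω
  | succ n ih =>
      have h1 := M.births_le n ω
      have h2 : M.pop n ω ≤ M.pop (n+1) ω := M.pop_mono ω (Nat.le_succ n)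
      have : M.pop (n+1) ω ≤ M.pop n ω + M.t := by omega
      calc M.pop (n+1) ω ≤ M.pop n ω + M.t := this
        _ ≤ M.t * (n+1) + M.t := by omega
        _ = M.t * (n+2) := by ring

/-- the set of `ω` where individual `i` is alive at time `n` with score exactly `u`. -/
def As (n i : ℕ) : Set Ω := {ω | i < M.pop n ω ∧ M.S n i ω = M.u}

/-- score of individual `i` goes up by exactly one from time `n` to `n+1`. -/
def One (n i : ℕ) : Set Ω := {ω | M.S (n+1) i ω = M.S n i ω + 1}

/-- score of individual `i` goes up by more than one from time `n` to `n+1`. -/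
def Big (n i : ℕ) : Set Ω := {ω | M.S n i ω + 1 < M.S (n+1) i ω}

lemma measSet_of_pop_S {n : ℕ} (P : ℕ → ℕ → Prop) (i : ℕ) :
    MeasurableSet {ω : Ω | P (M.pop n ω) (M.S n i ω)} := by
  have : {ω : Ω | P (M.pop n ω) (M.S n i ω)} =
      (fun ω => (M.pop n ω, M.S n i ω)) ⁻¹' {p : ℕ × ℕ | P p.1 p.2} := rfl
  rw [this]
  exact ((M.meas_pop n).prodMk (M.meas_S n i)) (.of_discrete)

lemma meas_As (n i : ℕ) : MeasurableSet (M.As n i) :=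
  M.measSet_of_pop_S (fun p s => i < p ∧ s = M.u) i

lemma meas_As' (n i : ℕ) : MeasurableSet[M.F n] (M.As n i) := by
  have : M.As n i =
      (fun ω => (M.pop n ω, M.S n i ω)) ⁻¹' {p : ℕ × ℕ | i < p.1 ∧ p.2 = M.u} := rfl
  rw [this]
  exact ((M.pop_adapted n).prodMk (M.S_adapted n i)) (.of_discrete)

lemma meas_One (n i : ℕ) : MeasurableSet (M.One n i) := by
  have : M.One n i =
      (fun ω => (M.S (n+1) i ω, M.S n i ω)) ⁻¹' {p : ℕ × ℕ | p.1 = p.2 + 1} := rfl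
  rw [this]
  exact ((M.meas_S (n+1) i).prodMk (M.meas_S n i)) (.of_discrete)

lemma meas_Big (n i : ℕ) : MeasurableSet (M.Big n i) := by
  have : M.Big n i =
      (fun ω => (M.S (n+1) i ω, M.S n i ω)) ⁻¹' {p : ℕ × ℕ | p.2 + 1 < p.1} := rfl
  rw [this]
  exact ((M.meas_S (n+1) i).prodMk (M.meas_S n i)) (.of_discrete)

/-- `X n s` as a sum of indicators over a deterministic index range. -/
lemma X_cast (n s N : ℕ) (hN : M.t * (n+1) ≤ N) (ω : Ω) :
    (M.X n s ω : ℝ) = ∑ i ∈ Finset.range N,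
      ({ω' | i < M.pop n ω' ∧ M.S n i ω' = s}).indicator (fun _ => (1:ℝ)) ω := by
  have hsub : Finset.range (M.pop n ω) ⊆ Finset.range N :=
    Finset.range_subset_range.2 (le_trans (le_trans (Nat.le_mul_of_pos_left _ (Nat.succ_le_iff.mp (Nat.le_refl _))) (by
      have := M.pop_le n ω; omega)) hN)
  rw [← Finset.sum_subset hsub (by
    intro i _ hi
    simp only [Finset.mem_range, not_lt] at hi
    simp [Set.indicator_apply, Set.mem_setOf_eq]
    intro h; omega)]
  rw [X, Finset.card_filter]
  push_cast
  refine Finset.sum_congr rfl fun i hi => ?_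
  simp only [Finset.mem_range] at hi
  simp [Set.indicator_apply, Set.mem_setOf_eq, hi]

end ModelS
namespace ModelS

variable {Ω : Type} [MeasurableSpace Ω] (M : ModelS Ω)

/-- pointwise decomposition of the count of score-`u` individuals at time `n+1`. -/
lemma ptwise (n i : ℕ) (ω : Ω) :
    ({ω' | i < M.pop (n+1) ω' ∧ M.S (n+1) i ω' = M.u}).indicator (fun _ => (1:ℝ)) ω =
      (M.As n i).indicator (fun _ => (1:ℝ)) ω
      - (M.As n i ∩ M.One n i).indicator (fun _ => (1:ℝ)) ω
      - (M.As n i ∩ M.Big n i).indicator (fun _ => (1:ℝ)) ω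
      + ({ω' | M.pop n ω' ≤ i ∧ i < M.pop (n+1) ω'}).indicator (fun _ => (1:ℝ)) ω
      - ({ω' | M.pop n ω' ≤ i ∧ i < M.pop (n+1) ω' ∧ M.u < M.S (n+1) i ω'}).indicator
          (fun _ => (1:ℝ)) ω := by
  have hSm := M.S_mono n i ω
  have hpm : M.pop n ω ≤ M.pop (n+1) ω := M.pop_mono ω (Nat.le_succ n)
  simp only [As, One, Big, Set.indicator_apply, Set.mem_setOf_eq, Set.mem_inter_iff]
  by_cases h1 : i < M.pop n ω
  · have hu := M.score_ge_u n i ω h1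
    have hu' := M.score_ge_u (n+1) i ω (lt_of_lt_of_le h1 hpm)
    split_ifs <;> first | (exfalso; omega) | norm_num
  · by_cases h2 : i < M.pop (n+1) ω
    · have hu' := M.score_ge_u (n+1) i ω h2
      split_ifs <;> first | (exfalso; omega) | norm_num
    · split_ifs <;> first | (exfalso; omega) | norm_num

lemma xi_sum (n : ℕ) (ω : Ω) :
    ∑ i ∈ Finset.range (M.t*(n+2)),
        ({ω' | M.pop n ω' ≤ i ∧ i < M.pop (n+1) ω'}).indicator (fun _ => (1:ℝ)) ω
      = (M.pop (n+1) ω : ℝ) - (M.pop n ω : ℝ) := by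
  have hpm : M.pop n ω ≤ M.pop (n+1) ω := M.pop_mono ω (Nat.le_succ n)
  have hsub : Finset.Ico (M.pop n ω) (M.pop (n+1) ω) ⊆ Finset.range (M.t*(n+2)) := by
    intro i hi
    simp only [Finset.mem_Ico] at hi
    simp only [Finset.mem_range]
    have h := M.pop_le (n+1) ω
    have h2 : M.t * (n + 1 + 1) = M.t * (n + 2) := by norm_num
    omega
  have : ∀ i ∈ Finset.range (M.t*(n+2)),
      ({ω' | M.pop n ω' ≤ i ∧ i < M.pop (n+1) ω'}).indicator (fun _ => (1:ℝ)) ω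
        = if i ∈ Finset.Ico (M.pop n ω) (M.pop (n+1) ω) then (1:ℝ) else 0 := by
    intro i _
    simp [Set.indicator_apply, Set.mem_setOf_eq, Finset.mem_Ico]
  rw [Finset.sum_congr rfl this, Finset.sum_ite_mem,
    Finset.inter_eq_right.2 hsub, Finset.sum_const, Nat.card_Ico]
  rw [nsmul_eq_mul, mul_one, Nat.cast_sub hpm]

end ModelS
namespace ModelS

variable {Ω : Type} [MeasurableSpace Ω] (M : ModelS Ω)

lemma integral_ind {A : Set Ω} (hA : MeasurableSet A) :
    ∫ ω, A.indicator (fun _ => (1:ℝ)) ω ∂M.μ = (M.μ A).toReal :=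
  integral_indicator_one hA

lemma intAs_nonneg (n i : ℕ) :
    0 ≤ ∫ ω, (M.As n i).indicator (fun _ => (1:ℝ)) ω ∂M.μ :=
  integral_nonneg fun ω => Set.indicator_nonneg (fun _ _ => zero_le_one) ω

/-- main conditional-expectation estimate for the `+1` transition. -/
lemma one_term (n : ℕ) (hn : 1 ≤ n) (i : ℕ) :
    |(∫ ω, (M.As n i ∩ M.One n i).indicator (fun _ => (1:ℝ)) ω ∂M.μ)
      - (M.a * M.u + M.b)/n * ∫ ω, (M.As n i).indicator (fun _ => (1:ℝ)) ω ∂M.μ|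
    ≤ M.c₀ * ((M.u : ℝ)/n)^2 * ∫ ω, (M.As n i).indicator (fun _ => (1:ℝ)) ω ∂M.μ := by
  haveI := M.isProb
  set f : Ω → ℝ := (M.One n i).indicator (fun _ => (1:ℝ)) with hf
  have hfint : Integrable f M.μ := (integrable_const 1).indicator (M.meas_One n i)
  have hAs := M.meas_As n i
  have hAs' := M.meas_As' n i
  set g : Ω → ℝ := M.μ[f | M.F n] with hg
  -- Step 1: the left integral is the set integral of the conditional expectation
  have e1 : ∫ ω, (M.As n i ∩ M.One n i).indicator (fun _ => (1:ℝ)) ω ∂M.μ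
      = ∫ ω in M.As n i, g ω ∂M.μ := by
    rw [setIntegral_condExp (M.F_le n) hfint hAs']
    rw [← integral_indicator hAs]
    congr 1
    funext ω
    rw [hf, Set.indicator_indicator]
  -- Step 2: the subtracted term is the set integral of a constant
  have e2 : (M.a * M.u + M.b)/n * ∫ ω, (M.As n i).indicator (fun _ => (1:ℝ)) ω ∂M.μ
      = ∫ _ω in M.As n i, (M.a * M.u + M.b)/n ∂M.μ := by
    rw [M.integral_ind hAs, setIntegral_const, smul_eq_mul, mul_comm, measureReal_def]
  rw [e1, e2, ← integral_sub integrable_condExp.integrableOn (integrableOn_const (measure_ne_top _ _) : IntegrableOn (fun _ => (M.a * M.u + M.b)/(n:ℝ)) (M.As n i) M.μ)]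
  -- Step 3: bound the set integral
  have hbound : ∀ᵐ ω ∂(M.μ.restrict (M.As n i)),
      |g ω - (M.a * M.u + M.b)/n| ≤ M.c₀ * ((M.u : ℝ)/n)^2 := by
    rw [ae_restrict_iff' hAs]
    filter_upwards [M.score_up_one n hn i] with ω h hmem
    obtain ⟨hip, hSu⟩ := hmem
    have := h hip
    rw [hSu] at this
    have harith : M.a * (M.u : ℝ) / n + M.b / n = (M.a * M.u + M.b)/n := by ring
    calc |g ω - (M.a * M.u + M.b)/n|
        = |g ω - M.a * (M.u : ℝ) / n - M.b / n| := by rw [← harith]; ring_nf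
      _ ≤ M.c₀ * ((M.u : ℝ)/n)^2 := this
  calc |∫ ω in M.As n i, (g ω - (M.a * M.u + M.b)/n) ∂M.μ|
      ≤ ∫ ω in M.As n i, |g ω - (M.a * M.u + M.b)/n| ∂M.μ := by
        simpa [Real.norm_eq_abs] using
          norm_integral_le_integral_norm (μ := M.μ.restrict (M.As n i))
            (f := fun ω => g ω - (M.a * M.u + M.b)/n)
    _ ≤ ∫ _ω in M.As n i, M.c₀ * ((M.u : ℝ)/n)^2 ∂M.μ := by
        refine integral_mono_ae ?_ ?_ hbound
        · exact (integrable_condExp.integrableOn.sub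
            (integrableOn_const (measure_ne_top _ _))).abs
        · exact integrableOn_const (measure_ne_top _ _)
    _ = M.c₀ * ((M.u : ℝ)/n)^2 * ∫ ω, (M.As n i).indicator (fun _ => (1:ℝ)) ω ∂M.μ := by
        rw [M.integral_ind hAs, setIntegral_const, smul_eq_mul, mul_comm, measureReal_def]

end ModelS
namespace ModelS

variable {Ω : Type} [MeasurableSpace Ω] (M : ModelS Ω)

lemma big_term (n : ℕ) (hn : 1 ≤ n) (i : ℕ) :
    ∫ ω, (M.As n i ∩ M.Big n i).indicator (fun _ => (1:ℝ)) ω ∂M.μ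
      ≤ M.c₀ * ((M.u : ℝ)/n)^2 * ∫ ω, (M.As n i).indicator (fun _ => (1:ℝ)) ω ∂M.μ := by
  haveI := M.isProb
  set f : Ω → ℝ := (M.Big n i).indicator (fun _ => (1:ℝ)) with hf
  have hfint : Integrable f M.μ := (integrable_const 1).indicator (M.meas_Big n i)
  have hAs := M.meas_As n i
  have hAs' := M.meas_As' n i
  set g : Ω → ℝ := M.μ[f | M.F n] with hg
  have e1 : ∫ ω, (M.As n i ∩ M.Big n i).indicator (fun _ => (1:ℝ)) ω ∂M.μ
      = ∫ ω in M.As n i, g ω ∂M.μ := by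
    rw [setIntegral_condExp (M.F_le n) hfint hAs']
    rw [← integral_indicator hAs]
    congr 1
    funext ω
    rw [hf, Set.indicator_indicator]
  rw [e1]
  have hbound : ∀ᵐ ω ∂(M.μ.restrict (M.As n i)), g ω ≤ M.c₀ * ((M.u : ℝ)/n)^2 := by
    rw [ae_restrict_iff' hAs]
    filter_upwards [M.score_up_big n hn i] with ω h hmem
    obtain ⟨hip, hSu⟩ := hmem
    have := h hip
    rwa [hSu] at this
  calc ∫ ω in M.As n i, g ω ∂M.μ
      ≤ ∫ _ω in M.As n i, M.c₀ * ((M.u : ℝ)/n)^2 ∂M.μ := by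
        refine integral_mono_ae integrable_condExp.integrableOn
          (integrableOn_const (measure_ne_top _ _)) hbound
    _ = M.c₀ * ((M.u : ℝ)/n)^2 * ∫ ω, (M.As n i).indicator (fun _ => (1:ℝ)) ω ∂M.μ := by
        rw [M.integral_ind hAs, setIntegral_const, smul_eq_mul, mul_comm, measureReal_def]

lemma Exi (n : ℕ) :
    |(∫ ω, ((M.pop (n+1) ω : ℝ) - (M.pop n ω : ℝ)) ∂M.μ) - M.m| ≤ M.c₀/(n+1) := by
  have h := M.xi_mean (n+1) (Nat.le_add_left 1 n)
  simpa using h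

/-- the event that some newborn at time `n+1` has score exceeding `u`. -/
def Ev (n : ℕ) : Set Ω :=
  {ω | ∃ i, M.pop n ω ≤ i ∧ i < M.pop (n+1) ω ∧ M.u < M.S (n+1) i ω}

/-- the event that `i` is a newborn at time `n+1` with score exceeding `u`. -/
def Wset (n i : ℕ) : Set Ω :=
  {ω | M.pop n ω ≤ i ∧ i < M.pop (n+1) ω ∧ M.u < M.S (n+1) i ω}

lemma meas_Wset (n i : ℕ) : MeasurableSet (M.Wset n i) := by
  have : M.Wset n i = (fun ω => (M.pop n ω, M.pop (n+1) ω, M.S (n+1) i ω)) ⁻¹'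
      {p : ℕ × ℕ × ℕ | p.1 ≤ i ∧ i < p.2.1 ∧ M.u < p.2.2} := rfl
  rw [this]
  exact ((M.meas_pop n).prodMk ((M.meas_pop (n+1)).prodMk (M.meas_S (n+1) i)))
    (.of_discrete)

lemma meas_Ico_set (n i : ℕ) :
    MeasurableSet {ω : Ω | M.pop n ω ≤ i ∧ i < M.pop (n+1) ω} := by
  have : {ω : Ω | M.pop n ω ≤ i ∧ i < M.pop (n+1) ω} =
      (fun ω => (M.pop n ω, M.pop (n+1) ω)) ⁻¹' {p : ℕ × ℕ | p.1 ≤ i ∧ i < p.2} := rfl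
  rw [this]
  exact ((M.meas_pop n).prodMk (M.meas_pop (n+1))) (.of_discrete)

lemma meas_Ev (n : ℕ) : MeasurableSet (M.Ev n) := by
  have : M.Ev n = ⋃ i, M.Wset n i := by
    ext ω; simp [Ev, Wset, Set.mem_iUnion]
  rw [this]
  exact MeasurableSet.iUnion fun i => M.meas_Wset n i

lemma mu_Ev (n : ℕ) : (M.μ (M.Ev n)).toReal ≤ M.c₀/(n+1) := by
  have h := M.new_score_u (n+1) (Nat.le_add_left 1 n)
  simp only [Nat.add_sub_cancel] at h
  have h2 : (M.μ (M.Ev n)).toReal ≤ (ENNReal.ofReal (M.c₀/((n+1:ℕ):ℝ))).toReal :=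
    ENNReal.toReal_mono ENNReal.ofReal_ne_top h
  rwa [ENNReal.toReal_ofReal (div_nonneg M.c₀_pos.le (by positivity)), Nat.cast_add, Nat.cast_one] at h2

lemma W_ptwise (n : ℕ) (ω : Ω) :
    ∑ i ∈ Finset.range (M.t*(n+2)), (M.Wset n i).indicator (fun _ => (1:ℝ)) ω
      ≤ (M.t : ℝ) * (M.Ev n).indicator (fun _ => (1:ℝ)) ω := by
  by_cases hE : ω ∈ M.Ev n
  · rw [Set.indicator_of_mem hE, mul_one]
    calc ∑ i ∈ Finset.range (M.t*(n+2)), (M.Wset n i).indicator (fun _ => (1:ℝ)) ω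
        ≤ ∑ i ∈ Finset.range (M.t*(n+2)),
            ({ω' | M.pop n ω' ≤ i ∧ i < M.pop (n+1) ω'}).indicator (fun _ => (1:ℝ)) ω := by
          refine Finset.sum_le_sum fun i _ => ?_
          refine Set.indicator_le_indicator_of_subset (s := M.Wset n i)
            (t := {ω' | M.pop n ω' ≤ i ∧ i < M.pop (n+1) ω'}) ?_ (fun _ => zero_le_one) ω
          intro ω' hω'
          exact ⟨hω'.1, hω'.2.1⟩
      _ = (M.pop (n+1) ω : ℝ) - (M.pop n ω : ℝ) := M.xi_sum n ω
      _ ≤ (M.t : ℝ) := by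
          have h1 := M.births_le n ω
          have h2 : M.pop n ω ≤ M.pop (n+1) ω := M.pop_mono ω (Nat.le_succ n)
          have : ((M.pop (n+1) ω - M.pop n ω : ℕ) : ℝ) ≤ (M.t : ℝ) := Nat.cast_le.2 h1
          rwa [Nat.cast_sub h2] at this
  · rw [Set.indicator_of_notMem hE, mul_zero]
    have : ∀ i ∈ Finset.range (M.t*(n+2)), (M.Wset n i).indicator (fun _ => (1:ℝ)) ω = 0 := by
      intro i _
      exact Set.indicator_of_notMem (s := M.Wset n i) (fun hmem => hE ⟨i, hmem⟩) _
    rw [Finset.sum_congr rfl this]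
    simp

lemma W_bound (n : ℕ) :
    ∑ i ∈ Finset.range (M.t*(n+2)), ∫ ω, (M.Wset n i).indicator (fun _ => (1:ℝ)) ω ∂M.μ
      ≤ (M.t : ℝ) * (M.c₀/(n+1)) := by
  haveI := M.isProb
  rw [← integral_finset_sum _ (fun i _ => (integrable_const 1).indicator (M.meas_Wset n i))]
  calc ∫ ω, (∑ i ∈ Finset.range (M.t*(n+2)), (M.Wset n i).indicator (fun _ => (1:ℝ)) ω) ∂M.μ
      ≤ ∫ ω, (M.t : ℝ) * (M.Ev n).indicator (fun _ => (1:ℝ)) ω ∂M.μ := by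
        refine integral_mono (integrable_finset_sum _
          (fun i _ => (integrable_const 1).indicator (M.meas_Wset n i)))
          (((integrable_const 1).indicator (M.meas_Ev n)).const_mul _) (M.W_ptwise n)
    _ = (M.t : ℝ) * (M.μ (M.Ev n)).toReal := by
        rw [integral_const_mul, M.integral_ind (M.meas_Ev n)]
    _ ≤ (M.t : ℝ) * (M.c₀/(n+1)) :=
        mul_le_mul_of_nonneg_left (M.mu_Ev n) (Nat.cast_nonneg _)

end ModelS
namespace ModelS

variable {Ω : Type} [MeasurableSpace Ω] (M : ModelS Ω)

lemma EX_eq_sum (n N : ℕ) (hN : M.t*(n+1) ≤ N) :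
    M.EX n M.u = ∑ i ∈ Finset.range N,
      ∫ ω, (M.As n i).indicator (fun _ => (1:ℝ)) ω ∂M.μ := by
  haveI := M.isProb
  have hpt : ∀ ω, (M.X n M.u ω : ℝ)
      = ∑ i ∈ Finset.range N, (M.As n i).indicator (fun _ => (1:ℝ)) ω :=
    fun ω => M.X_cast n M.u N hN ω
  rw [EX, integral_congr_ae (Filter.Eventually.of_forall hpt),
    integral_finset_sum _ (fun i _ => (integrable_const 1).indicator (M.meas_As n i))]

lemma EX_nonneg (n : ℕ) : 0 ≤ M.EX n M.u := by
  rw [M.EX_eq_sum n (M.t*(n+1)) le_rfl]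
  exact Finset.sum_nonneg fun i _ => M.intAs_nonneg n i

lemma EX_le (n : ℕ) : M.EX n M.u ≤ (M.t : ℝ) * (n+1) := by
  haveI := M.isProb
  rw [M.EX_eq_sum n (M.t*(n+1)) le_rfl]
  calc ∑ i ∈ Finset.range (M.t*(n+1)), ∫ ω, (M.As n i).indicator (fun _ => (1:ℝ)) ω ∂M.μ
      ≤ ∑ _i ∈ Finset.range (M.t*(n+1)), (1:ℝ) := by
        refine Finset.sum_le_sum fun i _ => ?_
        rw [M.integral_ind (M.meas_As n i)]
        exact ENNReal.toReal_le_of_le_ofReal zero_le_one (by simpa using prob_le_one)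
    _ = (M.t : ℝ) * (n+1) := by
        rw [Finset.sum_const, Finset.card_range, nsmul_eq_mul, mul_one]
        push_cast; ring

lemma integral_comb {α : Type} [MeasurableSpace α] (μ : MeasureTheory.Measure α)
    {f1 f2 f3 f4 f5 : α → ℝ} (h1 : MeasureTheory.Integrable f1 μ)
    (h2 : MeasureTheory.Integrable f2 μ) (h3 : MeasureTheory.Integrable f3 μ)
    (h4 : MeasureTheory.Integrable f4 μ) (h5 : MeasureTheory.Integrable f5 μ) :
    ∫ ω, (f1 ω - f2 ω - f3 ω + f4 ω - f5 ω) ∂μ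
      = (∫ ω, f1 ω ∂μ) - (∫ ω, f2 ω ∂μ) - (∫ ω, f3 ω ∂μ)
        + (∫ ω, f4 ω ∂μ) - (∫ ω, f5 ω ∂μ) := by
  have g2 : MeasureTheory.Integrable (fun ω => f1 ω - f2 ω) μ := h1.sub h2
  have g3 : MeasureTheory.Integrable (fun ω => f1 ω - f2 ω - f3 ω) μ := g2.sub h3
  have g4 : MeasureTheory.Integrable (fun ω => f1 ω - f2 ω - f3 ω + f4 ω) μ := g3.add h4
  rw [integral_sub g4 h5, integral_add g3 h4, integral_sub g2 h3, integral_sub h1 h2]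

lemma recursion (n : ℕ) (hn : 1 ≤ n) :
    |M.EX (n+1) M.u - (1 - (M.a*M.u + M.b)/n) * M.EX n M.u - M.m|
      ≤ 2*M.c₀*((M.u:ℝ)/n)^2 * M.EX n M.u + (1+(M.t:ℝ))*(M.c₀/(n+1)) := by
  haveI := M.isProb
  set N := M.t*(n+2) with hNdef
  set q : ℝ := M.a*M.u + M.b with hq
  set B : ℝ := M.c₀*((M.u:ℝ)/n)^2 with hB
  have hB0 : 0 ≤ B := by
    exact mul_nonneg M.c₀_pos.le (sq_nonneg _)
  set P : ℕ → ℝ := fun i => ∫ ω, (M.As n i).indicator (fun _ => (1:ℝ)) ω ∂M.μ with hP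
  set T1 : ℕ → ℝ := fun i =>
    ∫ ω, (M.As n i ∩ M.One n i).indicator (fun _ => (1:ℝ)) ω ∂M.μ with hT1
  set T2 : ℕ → ℝ := fun i =>
    ∫ ω, (M.As n i ∩ M.Big n i).indicator (fun _ => (1:ℝ)) ω ∂M.μ with hT2
  set Q : ℕ → ℝ := fun i =>
    ∫ ω, ({ω' | M.pop n ω' ≤ i ∧ i < M.pop (n+1) ω'}).indicator (fun _ => (1:ℝ)) ω ∂M.μ with hQ
  set R : ℕ → ℝ := fun i => ∫ ω, (M.Wset n i).indicator (fun _ => (1:ℝ)) ω ∂M.μ with hR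
  -- the integrated decomposition
  have hEXn : M.EX n M.u = ∑ i ∈ Finset.range N, P i :=
    M.EX_eq_sum n N (Nat.mul_le_mul le_rfl (by omega))
  have key : ∀ i ∈ Finset.range N,
      (∫ ω, (M.As (n+1) i).indicator
        (fun _ => (1:ℝ)) ω ∂M.μ) = P i - T1 i - T2 i + Q i - R i := by
    intro i _
    have iP : Integrable ((M.As n i).indicator (fun _ => (1:ℝ))) M.μ :=
      (integrable_const 1).indicator (M.meas_As n i)
    have iT1 : Integrable ((M.As n i ∩ M.One n i).indicator (fun _ => (1:ℝ))) M.μ :=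
      (integrable_const 1).indicator ((M.meas_As n i).inter (M.meas_One n i))
    have iT2 : Integrable ((M.As n i ∩ M.Big n i).indicator (fun _ => (1:ℝ))) M.μ :=
      (integrable_const 1).indicator ((M.meas_As n i).inter (M.meas_Big n i))
    have iQ : Integrable
        (({ω' | M.pop n ω' ≤ i ∧ i < M.pop (n+1) ω'}).indicator (fun _ => (1:ℝ))) M.μ :=
      (integrable_const 1).indicator (M.meas_Ico_set n i)
    have iR : Integrable ((M.Wset n i).indicator (fun _ => (1:ℝ))) M.μ :=
      (integrable_const 1).indicator (M.meas_Wset n i)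
    have hcong : (∫ ω, (M.As (n+1) i).indicator (fun _ => (1:ℝ)) ω ∂M.μ)
        = ∫ ω, ((M.As n i).indicator (fun _ => (1:ℝ)) ω
            - (M.As n i ∩ M.One n i).indicator (fun _ => (1:ℝ)) ω
            - (M.As n i ∩ M.Big n i).indicator (fun _ => (1:ℝ)) ω
            + ({ω' | M.pop n ω' ≤ i ∧ i < M.pop (n+1) ω'}).indicator (fun _ => (1:ℝ)) ω
            - (M.Wset n i).indicator (fun _ => (1:ℝ)) ω) ∂M.μ :=
      integral_congr_ae (Filter.Eventually.of_forall (M.ptwise n i))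
    rw [hcong, integral_comb M.μ iP iT1 iT2 iQ iR]
  have hEX1 : M.EX (n+1) M.u
      = ∑ i ∈ Finset.range N, P i - ∑ i ∈ Finset.range N, T1 i
        - ∑ i ∈ Finset.range N, T2 i + ∑ i ∈ Finset.range N, Q i
        - ∑ i ∈ Finset.range N, R i := by
    rw [M.EX_eq_sum (n+1) N (le_of_eq (by ring)), Finset.sum_congr rfl key]
    rw [Finset.sum_sub_distrib, Finset.sum_add_distrib, Finset.sum_sub_distrib,
      Finset.sum_sub_distrib]
  -- bounds on the four error pieces
  have ha1 : |∑ i ∈ Finset.range N, T1 i - q/n * M.EX n M.u| ≤ B * M.EX n M.u := by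
    rw [hEXn, Finset.mul_sum, ← Finset.sum_sub_distrib]
    calc |∑ i ∈ Finset.range N, (T1 i - q/n * P i)|
        ≤ ∑ i ∈ Finset.range N, |T1 i - q/n * P i| := Finset.abs_sum_le_sum_abs _ _
      _ ≤ ∑ i ∈ Finset.range N, B * P i :=
          Finset.sum_le_sum fun i _ => M.one_term n hn i
      _ = B * ∑ i ∈ Finset.range N, P i := by rw [Finset.mul_sum]
  have ha2u : ∑ i ∈ Finset.range N, T2 i ≤ B * M.EX n M.u := by
    rw [hEXn, Finset.mul_sum]
    exact Finset.sum_le_sum fun i _ => M.big_term n hn i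
  have ha2l : 0 ≤ ∑ i ∈ Finset.range N, T2 i :=
    Finset.sum_nonneg fun i _ =>
      integral_nonneg fun ω => Set.indicator_nonneg (fun _ _ => zero_le_one) ω
  have ha3 : |∑ i ∈ Finset.range N, Q i - M.m| ≤ M.c₀/(n+1) := by
    have hQsum : ∑ i ∈ Finset.range N, Q i
        = ∫ ω, ((M.pop (n+1) ω : ℝ) - (M.pop n ω : ℝ)) ∂M.μ := by
      rw [← integral_finset_sum _
        (fun i _ => (integrable_const 1).indicator (M.meas_Ico_set n i))]
      exact integral_congr_ae (Filter.Eventually.of_forall (M.xi_sum n))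
    rw [hQsum]
    exact M.Exi n
  have ha4u : ∑ i ∈ Finset.range N, R i ≤ (M.t : ℝ) * (M.c₀/(n+1)) := M.W_bound n
  have ha4l : 0 ≤ ∑ i ∈ Finset.range N, R i :=
    Finset.sum_nonneg fun i _ =>
      integral_nonneg fun ω => Set.indicator_nonneg (fun _ _ => zero_le_one) ω
  -- combine
  have hid : M.EX (n+1) M.u - (1 - q/n) * M.EX n M.u - M.m
      = -(∑ i ∈ Finset.range N, T1 i - q/n * M.EX n M.u)
        - ∑ i ∈ Finset.range N, T2 i
        + (∑ i ∈ Finset.range N, Q i - M.m)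
        - ∑ i ∈ Finset.range N, R i := by
    rw [hEX1, ← hEXn]; ring
  rw [hid, abs_le]
  obtain ⟨h1a, h1b⟩ := abs_le.1 ha1
  obtain ⟨h3a, h3b⟩ := abs_le.1 ha3
  constructor <;> nlinarith [M.EX_nonneg n]

end ModelS

/-- In Model S with `a > 0`, there is a constant `C₁` such that for all `n`,
`|E X_n(u) − n·m/(a·u + b + 1)| ≤ C₁`, where `u` is the minimal score of a new
individual. -/
theorem expectation_minimal_score {Ω : Type} [MeasurableSpace Ω]
    (M : ModelS Ω) (ha : 0 < M.a) :
    ∃ C₁ : ℝ, ∀ n : ℕ,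
      |M.EX n M.u - (n : ℝ) * M.m / (M.a * (M.u : ℝ) + M.b + 1)| ≤ C₁ := by
  set q : ℝ := M.a * M.u + M.b with hqdef
  have hu1 : (1:ℝ) ≤ (M.u : ℝ) := by exact_mod_cast M.u_pos
  have hq : 0 < q := by nlinarith [M.b_nonneg]
  set c : ℝ := M.m / (q + 1) with hcdef
  have hc : 0 < c := div_pos M.m_pos (by linarith)
  have hmc : M.m = c * (q + 1) := by
    rw [hcdef]; field_simp
  set K : ℝ := 4*M.c₀*(M.u:ℝ)^2*(M.t:ℝ) + (1+(M.t:ℝ))*M.c₀ with hKdef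
  have hK : 0 < K := by
    have h1 : (1:ℝ) ≤ (M.t:ℝ) := by exact_mod_cast M.t_pos
    have h2 : (0:ℝ) ≤ 4*M.c₀*(M.u:ℝ)^2*(M.t:ℝ) :=
      mul_nonneg (mul_nonneg (mul_nonneg (by norm_num) M.c₀_pos.le) (sq_nonneg _))
        (Nat.cast_nonneg _)
    have h3 : (0:ℝ) < (1+(M.t:ℝ))*M.c₀ := mul_pos (by linarith) M.c₀_pos
    rw [hKdef]
    linarith
  set e : ℕ → ℝ := fun n => M.EX n M.u - c * n with hedef
  -- the refined recursion
  have step' : ∀ n : ℕ, 1 ≤ n →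
      |M.EX (n+1) M.u - (1 - q/(n:ℝ)) * M.EX n M.u - M.m| ≤ K/(n:ℝ) := by
    intro n hn
    have hx : (1:ℝ) ≤ (n:ℝ) := by exact_mod_cast hn
    have hx0 : (0:ℝ) < (n:ℝ) := by linarith
    have h := M.recursion n hn
    refine h.trans ?_
    have hEXle := M.EX_le n
    have hEX0 := M.EX_nonneg n
    have hcu : (0:ℝ) ≤ 2*M.c₀*(M.u:ℝ)^2 :=
      mul_nonneg (mul_nonneg (by norm_num) M.c₀_pos.le) (sq_nonneg _)
    have hxsq : (0:ℝ) < (n:ℝ)^2 := by positivity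
    have hxne : ((n:ℕ):ℝ) ≠ 0 := ne_of_gt hx0
    have b1 : 2*M.c₀*((M.u:ℝ)/(n:ℝ))^2 * M.EX n M.u ≤ 4*M.c₀*(M.u:ℝ)^2*(M.t:ℝ)/(n:ℝ) := by
      have hEXle2 : M.EX n M.u ≤ (M.t:ℝ)*(2*(n:ℝ)) := by
        have ht0 : (0:ℝ) ≤ (M.t:ℝ) := Nat.cast_nonneg _
        nlinarith
      calc 2*M.c₀*((M.u:ℝ)/(n:ℝ))^2 * M.EX n M.u
          = (2*M.c₀*(M.u:ℝ)^2 * M.EX n M.u)/(n:ℝ)^2 := by ring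
        _ ≤ (2*M.c₀*(M.u:ℝ)^2 * ((M.t:ℝ)*(2*(n:ℝ))))/(n:ℝ)^2 :=
            (div_le_div_iff_of_pos_right hxsq).2 (mul_le_mul_of_nonneg_left hEXle2 hcu)
        _ = 4*M.c₀*(M.u:ℝ)^2*(M.t:ℝ)/(n:ℝ) := by
            field_simp; ring
      
    have b2 : (1+(M.t:ℝ))*(M.c₀/((n:ℝ)+1)) ≤ (1+(M.t:ℝ))*M.c₀/(n:ℝ) := by
      rw [mul_div_assoc]
      refine mul_le_mul_of_nonneg_left ?_ (by have : (0:ℝ) ≤ (M.t:ℝ) := Nat.cast_nonneg _; linarith)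
      exact div_le_div_of_nonneg_left M.c₀_pos.le hx0 (by linarith)
    calc 2*M.c₀*((M.u:ℝ)/(n:ℝ))^2 * M.EX n M.u + (1+(M.t:ℝ))*(M.c₀/((n:ℝ)+1))
        ≤ 4*M.c₀*(M.u:ℝ)^2*(M.t:ℝ)/(n:ℝ) + (1+(M.t:ℝ))*M.c₀/(n:ℝ) := add_le_add b1 b2
      _ = K/(n:ℝ) := by rw [hKdef]; ring
  -- recursion for the error sequence
  have estep : ∀ n : ℕ, 1 ≤ n → |e (n+1)| ≤ |1 - q/(n:ℝ)| * |e n| + K/(n:ℝ) := by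
    intro n hn
    have hx0 : (0:ℝ) < (n:ℝ) := by exact_mod_cast hn
    have hid : e (n+1) = (1 - q/(n:ℝ)) * e n
        + (M.EX (n+1) M.u - (1 - q/(n:ℝ)) * M.EX n M.u - M.m) := by
      have hxne : ((n:ℕ):ℝ) ≠ 0 := ne_of_gt hx0
      simp only [hedef]
      rw [hmc]
      push_cast
      field_simp
      ring
    rw [hid]
    calc |(1 - q/(n:ℝ)) * e n + (M.EX (n+1) M.u - (1 - q/(n:ℝ)) * M.EX n M.u - M.m)|
        ≤ |(1 - q/(n:ℝ)) * e n| + |M.EX (n+1) M.u - (1 - q/(n:ℝ)) * M.EX n M.u - M.m| :=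
          abs_add_le _ _
      _ ≤ |1 - q/(n:ℝ)| * |e n| + K/(n:ℝ) := by
          rw [abs_mul]
          exact add_le_add le_rfl (step' n hn)
  -- crude bound
  have crude : ∀ n : ℕ, |e n| ≤ ((M.t:ℝ) + c) * (n+1) := by
    intro n
    have hEXle := M.EX_le n
    have hEX0 := M.EX_nonneg n
    have hn0 : (0:ℝ) ≤ (n:ℝ) := Nat.cast_nonneg n
    have he : e n = M.EX n M.u - c*(n:ℝ) := rfl
    have ht0 : (0:ℝ) ≤ (M.t:ℝ) := Nat.cast_nonneg _
    rw [he, abs_le]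
    constructor <;> nlinarith [hc.le, mul_nonneg hc.le hn0, mul_nonneg ht0 hn0]
  set n₀ : ℕ := ⌈q⌉₊ + 1 with hn₀def
  have hn₀1 : 1 ≤ n₀ := by omega
  have hqn₀ : q ≤ (n₀ : ℝ) := by
    calc q ≤ (⌈q⌉₊ : ℝ) := Nat.le_ceil q
      _ ≤ (n₀ : ℝ) := by exact_mod_cast Nat.le_succ _
  set C : ℝ := max (((M.t:ℝ) + c) * (n₀+1)) (K/q) with hCdef
  have hCK : K ≤ q * C := by
    have : K/q ≤ C := le_max_right _ _
    calc K = q * (K/q) := by field_simp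
      _ ≤ q * C := mul_le_mul_of_nonneg_left this hq.le
  have main : ∀ k : ℕ, |e (n₀ + k)| ≤ C := by
    intro k
    induction k with
    | zero =>
        refine (crude n₀).trans ?_
        exact le_max_left _ _
    | succ k ih =>
        have hn : 1 ≤ n₀ + k := by omega
        have hx : (1:ℝ) ≤ ((n₀ + k : ℕ):ℝ) := by exact_mod_cast hn
        have hx0 : (0:ℝ) < ((n₀ + k : ℕ):ℝ) := by linarith
        have hqn : q ≤ ((n₀ + k : ℕ):ℝ) := by
          refine hqn₀.trans ?_
          exact_mod_cast Nat.le_add_right n₀ k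
        have hfac : 0 ≤ 1 - q/((n₀ + k : ℕ):ℝ) := by
          rw [sub_nonneg]
          exact div_le_one_of_le₀ hqn hx0.le
        have h := estep (n₀ + k) hn
        rw [abs_of_nonneg hfac] at h
        have : |e (n₀ + (k+1))| = |e (n₀ + k + 1)| := by ring_nf
        rw [this]
        calc |e (n₀ + k + 1)|
            ≤ (1 - q/((n₀ + k : ℕ):ℝ)) * |e (n₀ + k)| + K/((n₀ + k : ℕ):ℝ) := h
          _ ≤ (1 - q/((n₀ + k : ℕ):ℝ)) * C + (q*C)/((n₀ + k : ℕ):ℝ) := by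
              refine add_le_add (mul_le_mul_of_nonneg_left ih hfac) ?_
              exact (div_le_div_iff_of_pos_right hx0).2 hCK
          _ = C := by
              have hxne : ((n₀ + k : ℕ):ℝ) ≠ 0 := ne_of_gt hx0
              field_simp
              ring
  refine ⟨C, fun n => ?_⟩
  have hgoal : (n : ℝ) * M.m / (M.a * (M.u : ℝ) + M.b + 1) = c * n := by
    rw [hcdef, hqdef]; ring
  rw [hgoal]
  rcases le_or_gt n n₀ with hle | hlt
  · refine (crude n).trans ?_
    calc ((M.t:ℝ) + c) * (n+1) ≤ ((M.t:ℝ) + c) * (n₀+1) := by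
          have : (n:ℝ) ≤ (n₀:ℝ) := by exact_mod_cast hle
          have ht0 : (0:ℝ) ≤ (M.t:ℝ) := Nat.cast_nonneg _
          nlinarith
      _ ≤ C := le_max_left _ _
  · have : n = n₀ + (n - n₀) := by omega
    rw [this]
    exact main (n - n₀)
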